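/- For integers k ≥ 1 and 1 ≤ m ≤ k−1, with y_m = 1 / (1 + (1 − 2/(2k+1))^{2m−2}), the following identity holds: (1/2 + 1/(4k))² · y_m · (1 − y_{m+1}) = (1/2 − 1/(4k))² · (1 − y_m) · y_{m+1}. Consequently, with μ_m = 1/2 − 1/(4k) + y_m/(2k), one has ((1/2 + 1/(4k))·y_m)/μ_m = ((1/2 − 1/(4k))·y_{m+1})/(1 − μ_{m+1}). -/
import Mathlib


noncomputable section

/-- `y_m = 1 / (1 + (1 - 2/(2k+1))^(2m-2))`. -/
def yk (k m : ℕ) : ℝ := 1 / (1 + (1 - 2/(2*(k:ℝ) + 1)) ^ (2*m - 2))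

/-- `μ_m = 1/2 - 1/(4k) + y_m/(2k)`. -/
def muk (k m : ℕ) : ℝ := 1/2 - 1/(4*(k:ℝ)) + yk k m / (2*(k:ℝ))

theorem stmt_14 (k m : ℕ) (hk : 1 ≤ k) (hm : 1 ≤ m) (hmk : m ≤ k - 1) :
    (1/2 + 1/(4*(k:ℝ)))^2 * yk k m * (1 - yk k (m+1))
      = (1/2 - 1/(4*(k:ℝ)))^2 * (1 - yk k m) * yk k (m+1) ∧
    ((1/2 + 1/(4*(k:ℝ))) * yk k m) / muk k m
      = ((1/2 - 1/(4*(k:ℝ))) * yk k (m+1)) / (1 - muk k (m+1)) := by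
  have hK : (1:ℝ) ≤ (k:ℝ) := by exact_mod_cast hk
  have hK0 : (0:ℝ) < (k:ℝ) := by linarith
  set K : ℝ := (k:ℝ) with hKdef
  have h2K1 : (0:ℝ) < 2*K + 1 := by linarith
  have hrpos : (0:ℝ) < 1 - 2/(2*K + 1) := by
    have : 2/(2*K+1) < 1 := by rw [div_lt_one h2K1]; linarith
    linarith
  have hr1 : 1 - 2/(2*K + 1) < 1 := by
    have : 0 < 2/(2*K+1) := by positivity
    linarith
  set r : ℝ := 1 - 2/(2*K + 1) with hrdef
  have hx : (0:ℝ) < r ^ (2*m - 2) := pow_pos hrpos _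
  set x : ℝ := r ^ (2*m - 2) with hxdef
  have hexp : 2*(m+1) - 2 = (2*m - 2) + 2 := by omega
  have hy1 : yk k m = 1/(1 + x) := rfl
  have hy2 : yk k (m+1) = 1/(1 + x * r^2) := by
    rw [yk, hexp, pow_add]
  have hxr : (0:ℝ) < x * r^2 := by positivity
  have h1x : (0:ℝ) < 1 + x := by linarith
  have h1xr : (0:ℝ) < 1 + x * r^2 := by linarith
  have hy1pos : (0:ℝ) < 1/(1+x) := by positivity
  have hy1lt : 1/(1+x) < 1 := by rw [div_lt_one h1x]; linarith
  have hy2pos : (0:ℝ) < 1/(1+x*r^2) := by positivity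
  have hy2lt : 1/(1+x*r^2) < 1 := by rw [div_lt_one h1xr]; linarith
  have h4K : 1/(4*K) ≤ 1/4 := by
    rw [div_le_div_iff₀ (by linarith) (by norm_num)]; linarith
  have hmu1 : 0 < muk k m := by
    rw [muk, hy1]
    have : 0 < (1/(1+x))/(2*K) := by positivity
    rw [← hKdef]
    linarith
  have hmu2 : 0 < 1 - muk k (m+1) := by
    rw [muk, hy2, ← hKdef]
    have h2 : (1/(1+x*r^2))/(2*K) < 1/(2*K) :=
      (div_lt_div_iff_of_pos_right (by positivity : (0:ℝ) < 2*K)).2 hy2lt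
    have h5 : 1/(4*K) + 1/(4*K) = 1/(2*K) := by
      field_simp
      ring
    linarith [h2, h4K, h5]
  constructor
  · rw [hy1, hy2, hrdef]
    field_simp
    ring
  · rw [div_eq_div_iff hmu1.ne' hmu2.ne']
    rw [muk, muk, hy1, hy2, hrdef, ← hKdef]
    field_simp
    ring
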